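/- Let q be an odd prime power, t a positive integer, and a, b, u ∈ GF(q). Then F(z) = az + bz^q + (z + z^q + u)^t is a permutation of GF(q²) if and only if a ≠ b and x ↦ (a+b)x + 2x^t is a permutation of GF(q). -/

import Mathlib

open Function

/-- az + bz^q + (z + z^q + u)^t. -/
theorem stmt_15 {F E : Type*} [Field F] [Fintype F] [Field E] [Fintype E] [Algebra F E]
    (hq : Odd (Fintype.card F)) (hdim : Module.finrank F E = 2)
    (t : ℕ) (ht : 0 < t) (a b u : F) :
    Function.Bijective (fun z : E =>
      algebraMap F E a * z + algebraMap F E b * z ^ Fintype.card F +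
        (z + z ^ Fintype.card F + algebraMap F E u) ^ t)
      ↔ (a ≠ b ∧ Function.Bijective fun x : F => (a + b) * x + 2 * x ^ t) := by
  set q := Fintype.card F with hqdef
  set c : F →+* E := algebraMap F E with hcdef
  have hcinj : Function.Injective c := (algebraMap F E).injective
  have hF1 : 1 < q := Fintype.one_lt_card
  obtain ⟨p, hpF⟩ := CharP.exists F
  haveI := hpF
  obtain ⟨n, hp, hcard⟩ := FiniteField.card F p
  haveI : Fact p.Prime := ⟨hp⟩
  haveI : CharP E p := charP_of_injective_algebraMap hcinj p
  have hp2 : p ≠ 2 := by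
    intro h
    have : 2 ∣ q := by
      rw [hqdef, hcard, h]
      exact dvd_pow_self 2 n.pos.ne'
    exact (Nat.not_even_iff_odd.mpr hq) (even_iff_two_dvd.mpr this)
  have htwoF : (2 : F) ≠ 0 := by
    intro h
    have : ((2 : ℕ) : F) = 0 := by push_cast; exact h
    have := (CharP.cast_eq_zero_iff F p 2).mp this
    exact hp2 ((Nat.prime_dvd_prime_iff_eq hp Nat.prime_two).mp this)
  have htwoE : (2 : E) ≠ 0 := by
    intro h
    apply htwoF
    apply hcinj
    rw [map_ofNat, map_zero, h]
  -- cardinality of E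
  have hcardE : Fintype.card E = q * q := by
    rw [Module.card_eq_pow_finrank (K := F) (V := E), hdim, pow_two]
  -- q-power is additive on E
  have hadd : ∀ x y : E, (x + y) ^ q = x ^ q + y ^ q := by
    intro x y
    rw [hqdef, hcard]
    exact add_pow_char_pow ..
  have hneg : ∀ x : E, (-x) ^ q = -(x ^ q) := fun x => hq.neg_pow x
  have hsub : ∀ x y : E, (x - y) ^ q = x ^ q - y ^ q := by
    intro x y
    rw [sub_eq_add_neg, hadd, hneg, sub_eq_add_neg]
  have hfix : ∀ x : F, (c x) ^ q = c x := by
    intro x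
    rw [← map_pow, FiniteField.pow_card]
  have hqq : ∀ z : E, (z ^ q) ^ q = z := by
    intro z
    rw [← pow_mul, ← hcardE, FiniteField.pow_card]
  -- existence of a nonzero α with α^q = -α
  obtain ⟨z0, hz0⟩ : ∃ z : E, z ^ q ≠ z := by
    by_contra h
    push_neg at h
    obtain ⟨g, hg⟩ := IsCyclic.exists_generator (α := Eˣ)
    have hord : orderOf g = q * q - 1 := by
      rw [orderOf_eq_card_of_forall_mem_zpowers hg, Nat.card_units,
        Nat.card_eq_fintype_card, hcardE]
    have hgq : g ^ q = g := by
      ext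
      push_cast
      exact h g
    have hgq1 : g ^ (q - 1) = 1 := by
      have : g ^ (q - 1) * g = 1 * g := by
        rw [one_mul, ← pow_succ, Nat.sub_add_cancel hF1.le, hgq]
      exact mul_right_cancel this
    have hdvd := orderOf_dvd_of_pow_eq_one hgq1
    rw [hord] at hdvd
    have hle := Nat.le_of_dvd (by omega) hdvd
    have hlt : q < q * q := by nlinarith
    omega
  set α : E := z0 - z0 ^ q with hαdef
  have hα0 : α ≠ 0 := sub_ne_zero.mpr (Ne.symm hz0)
  have hαq : α ^ q = -α := by
    rw [hαdef, hsub, hqq, neg_sub]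
  -- ψ : F × F → E is a bijection
  set ψ : F × F → E := fun xy => c xy.1 + c xy.2 * α with hψdef
  have hψinj : Function.Injective ψ := by
    rintro ⟨x, y⟩ ⟨x', y'⟩ hxy
    simp only [hψdef] at hxy
    have key : c (x - x') = c (y' - y) * α := by
      rw [map_sub, map_sub]
      linear_combination hxy
    have key2 : c (x - x') = -(c (x - x')) := by
      conv_lhs => rw [← hfix (x - x'), key]
      rw [mul_pow, hfix, hαq, mul_neg, ← key]
    have hxx : c (x - x') = 0 := by
      have : 2 * c (x - x') = 0 := by linear_combination key2
      rcases mul_eq_zero.mp this with h | h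
      · exact absurd h htwoE
      · exact h
    have hx : x = x' := by
      have := hcinj (hxx.trans (map_zero c).symm)
      exact sub_eq_zero.mp this
    have hyy : c (y' - y) * α = 0 := by rw [← key, hxx]
    have hy : y = y' := by
      rcases mul_eq_zero.mp hyy with h | h
      · have := hcinj (h.trans (map_zero c).symm)
        exact (sub_eq_zero.mp this).symm
      · exact absurd h hα0
    exact Prod.ext hx hy
  have hψ : Function.Bijective ψ := by
    rw [Fintype.bijective_iff_injective_and_card]
    exact ⟨hψinj, by rw [Fintype.card_prod, hcardE]⟩
  -- the component maps
  set g : F → F := fun x => (a + b) * x + (2 * x + u) ^ t with hgdef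
  set h : F → F := fun y => (a - b) * y with hhdef
  -- conjugation identity
  have hcomp : (fun z : E =>
      c a * z + c b * z ^ q + (z + z ^ q + c u) ^ t) ∘ ψ = ψ ∘ Prod.map g h := by
    funext xy
    obtain ⟨x, y⟩ := xy
    have hzq : (c x + c y * α) ^ q = c x - c y * α := by
      rw [hadd, mul_pow, hfix, hfix, hαq, mul_neg, sub_eq_add_neg]
    simp only [Function.comp_apply, hψdef, Prod.map, hgdef, hhdef, hzq]
    have h1 : c x + c y * α + (c x - c y * α) + c u = c (2 * x + u) := by
      rw [map_add, map_mul, map_ofNat]; ring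
    rw [h1]
    simp only [map_add, map_mul, map_sub, map_pow, map_ofNat]
    ring
  have hmain : Function.Bijective (fun z : E =>
      c a * z + c b * z ^ q + (z + z ^ q + c u) ^ t)
      ↔ Function.Bijective (Prod.map g h) := by
    rw [← Function.Bijective.of_comp_iff _ hψ, hcomp,
      Function.Bijective.of_comp_iff' hψ]
  rw [hmain, Prod.map_bijective]
  -- now relate to the statement
  have hh : Function.Bijective h ↔ a ≠ b := by
    constructor
    · intro hbij hab
      have : h 0 = h 1 := by simp [hhdef, hab]
      exact one_ne_zero (hbij.injective this).symm
    · intro hab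
      exact (Equiv.mulLeft₀ (a - b) (sub_ne_zero.mpr hab)).bijective
  have hg2 : Function.Bijective g ↔
      Function.Bijective (fun x : F => (a + b) * x + 2 * x ^ t) := by
    set e : F → F := fun y => (y - u) * 2⁻¹ with hedef
    set L : F → F := fun w => 2 * w + (a + b) * u with hLdef
    have he : Function.Bijective e := by
      rw [Function.bijective_iff_has_inverse]
      refine ⟨fun w => 2 * w + u, fun y => ?_, fun w => ?_⟩ <;>
        simp only [hedef] <;> field_simp <;> ring
    have hL : Function.Bijective L := by
      rw [Function.bijective_iff_has_inverse]
      refine ⟨fun v => (v - (a + b) * u) * 2⁻¹, fun w => ?_, fun v => ?_⟩ <;>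
        simp only [hLdef] <;> field_simp <;> ring
    have hGL : L ∘ (g ∘ e) = fun x : F => (a + b) * x + 2 * x ^ t := by
      funext y
      simp only [Function.comp_apply, hedef, hLdef, hgdef]
      have h2 : 2 * ((y - u) * 2⁻¹) + u = y := by field_simp; ring
      rw [h2]
      field_simp
      ring
    calc Function.Bijective g
        ↔ Function.Bijective (g ∘ e) := (Function.Bijective.of_comp_iff g he).symm
      _ ↔ Function.Bijective (L ∘ (g ∘ e)) :=
          (Function.Bijective.of_comp_iff' hL _).symm
      _ ↔ _ := by rw [hGL]
  rw [hg2, hh, and_comm]
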